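/- Suppose U ≥ 1, ξ, η ∈ ℝ², max(|ξ|, |η|, |ξ − η|) ≤ U, and a := min(|ξ|, |η|, |ξ − η|) satisfies a ≤ 2⁻¹⁰ U⁻¹. Then for every choice of signs σ, μ, ν ∈ {+1, −1}: |σΛ(ξ) − μΛ(ξ − η) − νΛ(η)| ≥ √(a + a³)/4. -/

import Mathlib

/-!
`Lam ξ` = √(|ξ| + |ξ|³) for ξ ∈ ℝ²; Λ_κ = κΛ for κ ∈ {+1, −1}; the phase functions are
Φ_{σμν}(ξ, η) = σΛ(ξ) − μΛ(ξ − η) − νΛ(η).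
-/

noncomputable section

open Real

/-- The dispersion relation Λ(ξ) = √(|ξ| + |ξ|³) on ℝ². -/
def Lam (ξ : EuclideanSpace ℝ (Fin 2)) : ℝ := Real.sqrt (‖ξ‖ + ‖ξ‖ ^ 3)

set_option maxHeartbeats 2000000 in
private lemma K1' (a c b : ℝ) (ha : 0 ≤ a) (hac : a ≤ c) (hcb : c ≤ b)
    (hba : b - c ≤ a) (hsmall : a * b ≤ 1/1024) :
    Real.sqrt (b + b^3) - Real.sqrt (c + c^3) ≤ 3/4 * Real.sqrt (a + a^3) := by
  have hc0 : 0 ≤ c := le_trans ha hac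
  have hb0 : 0 ≤ b := le_trans hc0 hcb
  set La := Real.sqrt (a + a^3) with hLa
  set Lb := Real.sqrt (b + b^3) with hLb
  set Lc := Real.sqrt (c + c^3) with hLc
  have h0a : 0 ≤ a + a^3 := by linarith [pow_nonneg ha 3]
  have h0c : 0 ≤ c + c^3 := by linarith [pow_nonneg hc0 3]
  have h0b : 0 ≤ b + b^3 := by linarith [pow_nonneg hb0 3]
  have sqLa : La^2 = a + a^3 := Real.sq_sqrt h0a
  have sqLb : Lb^2 = b + b^3 := Real.sq_sqrt h0b
  have sqLc : Lc^2 = c + c^3 := Real.sq_sqrt h0c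
  have LaNN : 0 ≤ La := Real.sqrt_nonneg _
  have LbNN : 0 ≤ Lb := Real.sqrt_nonneg _
  have LcNN : 0 ≤ Lc := Real.sqrt_nonneg _
  have hmono1 : La ≤ Lc := Real.sqrt_le_sqrt (by linarith [pow_le_pow_left₀ ha hac 3])
  have hmono2 : Lc ≤ Lb := Real.sqrt_le_sqrt (by linarith [pow_le_pow_left₀ hc0 hcb 3])
  clear_value La Lb Lc
  have e1 : (b - c) * (b^2 + b*c + c^2) ≤ a * (b^2 + b*c + c^2) :=
    mul_le_mul_of_nonneg_right hba (by nlinarith)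
  have e2 : a * (b^2 + b*c + c^2) ≤ a * (3 * b^2) :=
    mul_le_mul_of_nonneg_left (by nlinarith) ha
  have hN : Lb^2 - Lc^2 ≤ a * (1 + 3*b^2) := by
    rw [sqLb, sqLc]; linarith [e1, e2]
  rcases le_or_gt b (2/5) with hbsmall | hblarge
  · -- small case: b ≤ 2/5
    have hN2 : Lb^2 - Lc^2 ≤ (3/2) * La^2 := by
      rw [sqLa]
      have hb2 : b^2 ≤ (2/5:ℝ)^2 := by nlinarith
      linarith [hN, mul_le_mul_of_nonneg_left hb2 ha, pow_nonneg ha 3]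
    rcases le_or_gt Lb Lc with hd | hd
    · nlinarith [LaNN]
    · have hd0 : 0 ≤ Lb - Lc := by linarith
      have step : (Lb - Lc) * (2 * La) ≤ (Lb - Lc) * (Lb + Lc) :=
        mul_le_mul_of_nonneg_left (by linarith) hd0
      have step2 : (Lb - Lc) * (Lb + Lc) ≤ (3/2) * La^2 := by linarith [hN2]
      rcases eq_or_lt_of_le LaNN with hLa0 | hLa0
      · nlinarith [step2, LcNN, hd]
      · nlinarith [step, step2, hLa0]
  · -- large case: b > 2/5
    have hb0' : 0 < b := by linarith
    set sa := Real.sqrt a with hsa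
    set sb := Real.sqrt b with hsb
    have hsa2 : sa^2 = a := Real.sq_sqrt ha
    have hsb2 : sb^2 = b := Real.sq_sqrt hb0'.le
    have saNN : 0 ≤ sa := Real.sqrt_nonneg _
    have hsb0 : 0 < sb := Real.sqrt_pos.mpr hb0'
    have hprod : sa * sb ≤ 1/32 := by
      rw [hsa, hsb, ← Real.sqrt_mul ha]
      calc Real.sqrt (a * b) ≤ Real.sqrt (1/1024) := Real.sqrt_le_sqrt hsmall
        _ = 1/32 := by
            rw [show (1:ℝ)/1024 = (1/32)^2 by norm_num, Real.sqrt_sq (by norm_num)]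
    have hsqb3 : Real.sqrt (b^3) = b * sb := by
      rw [show b^3 = b^2 * b by ring, Real.sqrt_mul (sq_nonneg b), Real.sqrt_sq hb0'.le]
    have hLb_lb : b * sb ≤ Lb := by
      rw [hLb, ← hsqb3]; exact Real.sqrt_le_sqrt (by nlinarith)
    have hLa_lb : sa ≤ La := by
      rw [hLa, hsa]; exact Real.sqrt_le_sqrt (by linarith [pow_nonneg ha 3])
    clear_value sa sb
    have hd0 : 0 ≤ Lb - Lc := sub_nonneg.mpr hmono2
    have hchain : (Lb - Lc) * (b * sb) ≤ 10 * a * b^2 := by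
      have s1 : (Lb - Lc) * (b * sb) ≤ (Lb - Lc) * Lb :=
        mul_le_mul_of_nonneg_left hLb_lb hd0
      have s2 : (Lb - Lc) * Lb ≤ (Lb - Lc) * (Lb + Lc) :=
        mul_le_mul_of_nonneg_left (by linarith) hd0
      have h25 : (1:ℝ) ≤ (25/4) * b^2 := by nlinarith
      have h10 : a * (1 + 3*b^2) ≤ 10 * a * b^2 := by
        linarith [mul_le_mul_of_nonneg_left h25 ha]
      linarith [s1, s2, hN, h10]
    have hcube : (0:ℝ) < b * sb := by positivity
    have h1 : Lb - Lc ≤ 10 * sa^2 * sb := by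
      have hrw : 10 * a * b^2 = (10 * sa^2 * sb) * (b * sb) := by
        rw [← hsa2, ← hsb2]; ring
      rw [hrw] at hchain
      exact le_of_mul_le_mul_right hchain hcube
    have h2 : 10 * sa^2 * sb ≤ (10/32) * sa := by
      nlinarith [mul_le_mul_of_nonneg_left hprod saNN]
    linarith

private lemma K1abs (a b c : ℝ) (ha : 0 ≤ a) (hab : a ≤ b) (hac : a ≤ c)
    (hbc : |b - c| ≤ a) (hsb : a * b ≤ 1/1024) (hsc : a * c ≤ 1/1024) :
    |Real.sqrt (b + b^3) - Real.sqrt (c + c^3)| ≤ 3/4 * Real.sqrt (a + a^3) := by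
  obtain ⟨hbc1, hbc2⟩ := abs_le.mp hbc
  have hpos : 0 ≤ 3/4 * Real.sqrt (a + a^3) := by positivity
  rw [abs_le]
  rcases le_total c b with hcb | hbc'
  · have hmono : Real.sqrt (c + c^3) ≤ Real.sqrt (b + b^3) :=
      Real.sqrt_le_sqrt (by linarith [pow_le_pow_left₀ (le_trans ha hac) hcb 3])
    have h := K1' a c b ha hac hcb (by linarith) hsb
    exact ⟨by linarith, h⟩
  · have hmono : Real.sqrt (b + b^3) ≤ Real.sqrt (c + c^3) :=
      Real.sqrt_le_sqrt (by linarith [pow_le_pow_left₀ (le_trans ha hab) hbc' 3])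
    have h := K1' a b c ha hab hbc' (by linarith) hsc
    exact ⟨by linarith, by linarith⟩

set_option maxHeartbeats 2000000 in
private lemma key (a b c s t u : ℝ) (ha : 0 ≤ a) (hab : a ≤ b) (hac : a ≤ c)
    (hbc : |b - c| ≤ a) (hsb : a * b ≤ 1/1024) (hsc : a * c ≤ 1/1024)
    (hs : s = 1 ∨ s = -1) (ht : t = 1 ∨ t = -1) (hu : u = 1 ∨ u = -1) :
    Real.sqrt (a + a^3) / 4 ≤
      |s * Real.sqrt (a + a^3) + t * Real.sqrt (b + b^3) + u * Real.sqrt (c + c^3)| := by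
  have hb0 : 0 ≤ b := le_trans ha hab
  have hc0 : 0 ≤ c := le_trans ha hac
  set La := Real.sqrt (a + a^3) with hLa
  set Lb := Real.sqrt (b + b^3) with hLb
  set Lc := Real.sqrt (c + c^3) with hLc
  have LaNN : 0 ≤ La := Real.sqrt_nonneg _
  have hmb : La ≤ Lb := Real.sqrt_le_sqrt (by linarith [pow_le_pow_left₀ ha hab 3])
  have hmc : La ≤ Lc := Real.sqrt_le_sqrt (by linarith [pow_le_pow_left₀ ha hac 3])
  clear_value La Lb Lc
  have hK := K1abs a b c ha hab hac hbc hsb hsc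
  rw [abs_le] at hK
  have hE1 := le_abs_self (s * La + t * Lb + u * Lc)
  have hE2 := neg_abs_le (s * La + t * Lb + u * Lc)
  rcases hs with rfl | rfl <;> rcases ht with rfl | rfl <;> rcases hu with rfl | rfl <;>
    obtain ⟨hK1, hK2⟩ := hK <;> linarith

theorem stmt8 (U : ℝ) (hU : 1 ≤ U) (ξ η : EuclideanSpace ℝ (Fin 2))
    (h1 : ‖ξ‖ ≤ U) (h2 : ‖η‖ ≤ U) (h3 : ‖ξ - η‖ ≤ U)
    (ha : min (min ‖ξ‖ ‖η‖) ‖ξ - η‖ ≤ 2 ^ (-10 : ℤ) * U⁻¹) :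
    ∀ σ μ ν : ℝ, (σ = 1 ∨ σ = -1) → (μ = 1 ∨ μ = -1) → (ν = 1 ∨ ν = -1) →
      Real.sqrt (min (min ‖ξ‖ ‖η‖) ‖ξ - η‖ + (min (min ‖ξ‖ ‖η‖) ‖ξ - η‖) ^ 3) / 4 ≤
        |σ * Lam ξ - μ * Lam (ξ - η) - ν * Lam η| := by
  intro σ μ ν hσ hμ hν
  have hU0 : 0 < U := lt_of_lt_of_le one_pos hU
  set x := ‖ξ‖ with hx
  set y := ‖η‖ with hy
  set z := ‖ξ - η‖ with hz
  have hx0 : 0 ≤ x := norm_nonneg _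
  have hy0 : 0 ≤ y := norm_nonneg _
  have hz0 : 0 ≤ z := norm_nonneg _
  set a := min (min x y) z with haa
  have ha0 : 0 ≤ a := le_min (le_min hx0 hy0) hz0
  have hax : a ≤ x := le_trans (min_le_left _ _) (min_le_left _ _)
  have hay : a ≤ y := le_trans (min_le_left _ _) (min_le_right _ _)
  have haz : a ≤ z := min_le_right _ _
  have ha' : a ≤ 1/1024 * U⁻¹ := by
    rwa [show ((2:ℝ) ^ (-10 : ℤ)) = 1/1024 by norm_num] at ha
  have hsmall : ∀ w : ℝ, 0 ≤ w → w ≤ U → a * w ≤ 1/1024 := by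
    intro w hw0 hw
    calc a * w ≤ (1/1024 * U⁻¹) * U := mul_le_mul ha' hw hw0 (by positivity)
      _ = 1/1024 := by field_simp
  have hsx : a * x ≤ 1/1024 := hsmall x hx0 h1
  have hsy : a * y ≤ 1/1024 := hsmall y hy0 h2
  have hsz : a * z ≤ 1/1024 := hsmall z hz0 h3
  have hμ' : -μ = 1 ∨ -μ = -1 := by rcases hμ with rfl | rfl <;> simp
  have hν' : -ν = 1 ∨ -ν = -1 := by rcases hν with rfl | rfl <;> simp
  have hL1 : Lam ξ = Real.sqrt (x + x^3) := rfl
  have hL2 : Lam (ξ - η) = Real.sqrt (z + z^3) := rfl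
  have hL3 : Lam η = Real.sqrt (y + y^3) := rfl
  rw [hL1, hL2, hL3]
  -- triangle inequalities
  have t1 : |x - y| ≤ z := abs_norm_sub_norm_le ξ η
  have t2 : |z - y| ≤ x := by
    have := abs_norm_sub_norm_le (ξ - η) (-η)
    simpa [sub_neg_eq_add, sub_add_cancel] using this
  have t3 : |x - z| ≤ y := by
    have := abs_norm_sub_norm_le ξ (ξ - η)
    simpa [sub_sub_cancel] using this
  rcases min_choice (min x y) z with h | h
  · rcases min_choice x y with h' | h'
    · -- a = x
      have hax' : a = x := by rw [haa, h, h']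
      have heq : σ * Real.sqrt (x + x^3) - μ * Real.sqrt (z + z^3) - ν * Real.sqrt (y + y^3)
          = σ * Real.sqrt (a + a^3) + (-μ) * Real.sqrt (z + z^3) +
            (-ν) * Real.sqrt (y + y^3) := by
        rw [hax']; ring
      rw [heq]
      exact key a z y σ (-μ) (-ν) ha0 haz hay (by rwa [← hax'] at t2) hsz hsy hσ hμ' hν'
    · -- a = y
      have hay' : a = y := by rw [haa, h, h']
      have heq : σ * Real.sqrt (x + x^3) - μ * Real.sqrt (z + z^3) - ν * Real.sqrt (y + y^3)
          = (-ν) * Real.sqrt (a + a^3) + σ * Real.sqrt (x + x^3) +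
            (-μ) * Real.sqrt (z + z^3) := by
        rw [hay']; ring
      rw [heq]
      exact key a x z (-ν) σ (-μ) ha0 hax haz (by rwa [← hay'] at t3) hsx hsz hν' hσ hμ'
  · -- a = z
    have haz' : a = z := by rw [haa, h]
    have heq : σ * Real.sqrt (x + x^3) - μ * Real.sqrt (z + z^3) - ν * Real.sqrt (y + y^3)
        = (-μ) * Real.sqrt (a + a^3) + σ * Real.sqrt (x + x^3) +
          (-ν) * Real.sqrt (y + y^3) := by
      rw [haz']; ring
    rw [heq]
    exact key a x y (-μ) σ (-ν) ha0 hax hay (by rwa [← haz'] at t1) hsx hsy hμ' hσ hν'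

end
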